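/- For γ = [[a,b],[c,d]] in SL₂(ℝ) with ‖γ‖ = max(|a|,|b|,|c|,|d|), the hyperbolic distance from i to γ·i satisfies d(γ·i, i) ≤ 2 log ‖γ‖ + 3 log 2. -/

import Mathlib

open UpperHalfPlane

set_option maxHeartbeats 1600000 in
/-- For γ ∈ SL₂(ℝ) with ‖γ‖ = max(|a|,|b|,|c|,|d|),
d(γ·i, i) ≤ 2 log ‖γ‖ + 3 log 2. -/
theorem dist_smul_I_le (γ : Matrix.SpecialLinearGroup (Fin 2) ℝ) :
    dist (γ • UpperHalfPlane.I) UpperHalfPlane.I ≤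
      2 * Real.log (max (max |γ 0 0| |γ 0 1|) (max |γ 1 0| |γ 1 1|)) + 3 * Real.log 2 := by
  set a := γ 0 0 with ha
  set b := γ 0 1 with hb
  set c := γ 1 0 with hc
  set d := γ 1 1 with hd
  have hdet : a * d - b * c = 1 := by
    have := γ.2
    rwa [Matrix.det_fin_two] at this
  have hS : 0 < c ^ 2 + d ^ 2 := by
    rcases eq_or_ne c 0 with h | h
    · rcases eq_or_ne d 0 with h' | h'
      · exfalso; rw [h, h'] at hdet; simp at hdet
      · positivity
    · positivity
  have hS' : c ^ 2 + d ^ 2 ≠ 0 := ne_of_gt hS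
  have hco : ((γ • UpperHalfPlane.I : ℍ) : ℂ)
      = ((a : ℂ) * Complex.I + b) / ((c : ℂ) * Complex.I + d) := by
    rw [UpperHalfPlane.specialLinearGroup_apply]
    simp [UpperHalfPlane.coe_I]
    rfl
  have him : UpperHalfPlane.im (γ • UpperHalfPlane.I) = 1 / (c ^ 2 + d ^ 2) := by
    rw [← UpperHalfPlane.coe_im, hco, Complex.div_im]
    simp [Complex.normSq_apply]
    rw [div_sub_div_same, hdet, one_div]
    ring_nf
  have hre : UpperHalfPlane.re (γ • UpperHalfPlane.I) = (a * c + b * d) / (c ^ 2 + d ^ 2) := by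
    rw [← UpperHalfPlane.coe_re, hco, Complex.div_re]
    simp [Complex.normSq_apply]
    rw [← add_div]
    ring_nf
  have hkey : (a * c + b * d) ^ 2 = (a ^ 2 + b ^ 2) * (c ^ 2 + d ^ 2) - 1 := by
    nlinarith [hdet]
  have hdist2 : dist ((γ • UpperHalfPlane.I : ℍ) : ℂ) ((UpperHalfPlane.I : ℍ) : ℂ) ^ 2
      = UpperHalfPlane.re (γ • UpperHalfPlane.I) ^ 2
        + (UpperHalfPlane.im (γ • UpperHalfPlane.I) - 1) ^ 2 := by
    rw [Complex.dist_eq, Complex.sq_norm, Complex.normSq_apply]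
    simp [UpperHalfPlane.coe_re, UpperHalfPlane.coe_im, UpperHalfPlane.coe_I]
    ring
  have hcosh : Real.cosh (dist (γ • UpperHalfPlane.I) UpperHalfPlane.I)
      = (a ^ 2 + b ^ 2 + c ^ 2 + d ^ 2) / 2 := by
    rw [UpperHalfPlane.cosh_dist, hdist2, hre, him, UpperHalfPlane.I_im]
    field_simp
    linear_combination hkey
  set m := max (max |a| |b|) (max |c| |d|) with hm
  have hma : |a| ≤ m := le_trans (le_max_left _ _) (le_max_left _ _)
  have hmb : |b| ≤ m := le_trans (le_max_right _ _) (le_max_left _ _)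
  have hmc : |c| ≤ m := le_trans (le_max_left _ _) (le_max_right _ _)
  have hmd : |d| ≤ m := le_trans (le_max_right _ _) (le_max_right _ _)
  have hsum2 : 2 ≤ a ^ 2 + b ^ 2 + c ^ 2 + d ^ 2 := by
    nlinarith [hdet, sq_nonneg (a - d), sq_nonneg (b + c)]
  have hsum4 : a ^ 2 + b ^ 2 + c ^ 2 + d ^ 2 ≤ 4 * m ^ 2 := by
    have h1 : a ^ 2 ≤ m ^ 2 := by rw [← sq_abs]; exact pow_le_pow_left₀ (abs_nonneg a) hma 2
    have h2 : b ^ 2 ≤ m ^ 2 := by rw [← sq_abs]; exact pow_le_pow_left₀ (abs_nonneg b) hmb 2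
    have h3 : c ^ 2 ≤ m ^ 2 := by rw [← sq_abs]; exact pow_le_pow_left₀ (abs_nonneg c) hmc 2
    have h4 : d ^ 2 ≤ m ^ 2 := by rw [← sq_abs]; exact pow_le_pow_left₀ (abs_nonneg d) hmd 2
    linarith
  have hmnn : 0 ≤ m := (abs_nonneg a).trans hma
  have hm0 : 0 < m := by
    rcases hmnn.lt_or_eq with h | h
    · exact h
    · exfalso
      rw [← h] at hsum4
      norm_num at hsum4
      linarith
  have hR : 2 * Real.log m + 3 * Real.log 2 = Real.log (8 * m ^ 2) := by
    rw [Real.log_mul (by norm_num) (by positivity), show (8:ℝ) = 2 ^ 3 by norm_num,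
      Real.log_pow, Real.log_pow]
    push_cast; ring
  rw [hR]
  have hRpos : 0 ≤ Real.log (8 * m ^ 2) :=
    Real.log_nonneg (by nlinarith)
  have hcoshR : 4 * m ^ 2 ≤ Real.cosh (Real.log (8 * m ^ 2)) := by
    rw [Real.cosh_eq]
    have := Real.exp_log (show (0:ℝ) < 8 * m ^ 2 by positivity)
    have h2 := (Real.exp_pos (-Real.log (8 * m ^ 2))).le
    nlinarith
  have hle : Real.cosh (dist (γ • UpperHalfPlane.I) UpperHalfPlane.I)
      ≤ Real.cosh (Real.log (8 * m ^ 2)) := by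
    rw [hcosh]; nlinarith
  have h := Real.cosh_le_cosh.mp hle
  rwa [abs_of_nonneg dist_nonneg, abs_of_nonneg hRpos] at h
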